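/- Let A be an n × N real matrix with operator norm ‖A‖ ≤ 3√N, let ε ∈ (0,1), δ > 0, and let 𝒩 be an ε-net of δ√N B₁^N (in ℓ₂ distance) such that every y ∈ 𝒩 satisfies ‖Ay‖₂ ≥ 6ε√N ‖y‖₂. Then every x ∈ Ker A with ‖x‖₂ = 1 satisfies ‖x‖₁ ≥ δ√N. -/
import Mathlib


open Matrix

/-- The `ℓ₁` norm on `ℝ^N`. -/
def l1Norm {N : ℕ} (x : Fin N → ℝ) : ℝ := ∑ i, |x i|

/-- The `ℓ₂` norm on `ℝ^N`. -/
noncomputable def l2Norm {N : ℕ} (x : Fin N → ℝ) : ℝ :=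
  Real.sqrt (∑ i, x i ^ 2)

/-- The `ℓ₂ → ℓ₂` operator norm of an `n × N` real matrix. -/
noncomputable def matrixOpNorm {n N : ℕ} (V : Matrix (Fin n) (Fin N) ℝ) : ℝ :=
  ‖LinearMap.toContinuousLinearMap (Matrix.toEuclideanLin V)‖

lemma l2Norm_eq {N : ℕ} (x : Fin N → ℝ) :
    l2Norm x = ‖(WithLp.equiv 2 (Fin N → ℝ)).symm x‖ := by
  rw [EuclideanSpace.norm_eq, l2Norm]
  congr 1
  refine Finset.sum_congr rfl fun i _ => ?_
  rw [Real.norm_eq_abs, sq_abs]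
  rfl

lemma l2Norm_sub_le {N : ℕ} (x y : Fin N → ℝ) :
    l2Norm x - l2Norm (x - y) ≤ l2Norm y := by
  rw [l2Norm_eq, l2Norm_eq, l2Norm_eq]
  have : (WithLp.equiv 2 (Fin N → ℝ)).symm (x - y) =
      (WithLp.equiv 2 (Fin N → ℝ)).symm x - (WithLp.equiv 2 (Fin N → ℝ)).symm y := rfl
  rw [this]
  have := norm_sub_norm_le ((WithLp.equiv 2 (Fin N → ℝ)).symm x)
    ((WithLp.equiv 2 (Fin N → ℝ)).symm y)
  have h2 := le_abs_self (‖(WithLp.equiv 2 (Fin N → ℝ)).symm x‖ -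
    ‖(WithLp.equiv 2 (Fin N → ℝ)).symm y‖)
  linarith

lemma mulVec_l2_bound {n N : ℕ} (A : Matrix (Fin n) (Fin N) ℝ) (v : Fin N → ℝ) :
    l2Norm (A.mulVec v) ≤ matrixOpNorm A * l2Norm v := by
  rw [l2Norm_eq, l2Norm_eq]
  have : (WithLp.equiv 2 (Fin n → ℝ)).symm (A.mulVec v) =
      LinearMap.toContinuousLinearMap (Matrix.toEuclideanLin A)
        ((WithLp.equiv 2 (Fin N → ℝ)).symm v) := rfl
  rw [this]
  exact (LinearMap.toContinuousLinearMap (Matrix.toEuclideanLin A)).le_opNorm _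

/-- Let `A` be an `n × N` real matrix with `‖A‖ ≤ 3√N`, let `0 < ε < 1/2`,
`δ > 0`, and let `𝒩` be an `ε`-net (in `ℓ₂` distance) of `δ√N B₁^N` such that
every `y ∈ 𝒩` satisfies `‖Ay‖₂ ≥ 6ε√N ‖y‖₂`. Then every `x ∈ Ker A` with
`‖x‖₂ = 1` satisfies `‖x‖₁ ≥ δ√N`. -/
theorem kernel_l1_lower_bound_of_net
    {n N : ℕ} (hN : 1 ≤ N) (A : Matrix (Fin n) (Fin N) ℝ)
    (ε δ : ℝ) (hε0 : 0 < ε) (hε : ε < 1/2) (hδ : 0 < δ)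
    (hA : matrixOpNorm A ≤ 3 * Real.sqrt N)
    (𝒩 : Finset (Fin N → ℝ))
    (h𝒩sub : ∀ y ∈ 𝒩, l1Norm y ≤ δ * Real.sqrt N)
    (hnet : ∀ x : Fin N → ℝ, l1Norm x ≤ δ * Real.sqrt N →
      ∃ y ∈ 𝒩, l2Norm (x - y) ≤ ε)
    (hAy : ∀ y ∈ 𝒩, 6 * ε * Real.sqrt N * l2Norm y ≤ l2Norm (A.mulVec y)) :
    ∀ x : Fin N → ℝ, A.mulVec x = 0 → l2Norm x = 1 →
      δ * Real.sqrt N ≤ l1Norm x := by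
  intro x hker hx2
  by_contra hlt
  push_neg at hlt
  obtain ⟨y, hy𝒩, hxy⟩ := hnet x hlt.le
  have hsqrtN : (1 : ℝ) ≤ Real.sqrt N := by
    rw [show (1:ℝ) = Real.sqrt 1 by simp]
    exact Real.sqrt_le_sqrt (by exact_mod_cast hN)
  have hsN : (0 : ℝ) < Real.sqrt N := lt_of_lt_of_le one_pos hsqrtN
  -- ‖y‖₂ ≥ 1 - ε
  have hy2 : 1 - ε ≤ l2Norm y := by
    have := l2Norm_sub_le x y
    linarith [hx2 ▸ this]
  -- ‖Ay‖ = ‖A(y - x)‖ ≤ ‖A‖ * ε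
  have hAeq : A.mulVec y = A.mulVec (y - x) + A.mulVec x := by
    rw [← Matrix.mulVec_add]; ring_nf
  have hAyx : l2Norm (A.mulVec y) ≤ matrixOpNorm A * l2Norm (y - x) := by
    rw [hAeq, hker, add_zero]
    exact mulVec_l2_bound A (y - x)
  have hsym : l2Norm (y - x) = l2Norm (x - y) := by
    unfold l2Norm
    congr 1
    refine Finset.sum_congr rfl fun i _ => ?_
    simp [Pi.sub_apply]; ring
  have hAnn : 0 ≤ matrixOpNorm A := norm_nonneg _
  have hup : l2Norm (A.mulVec y) ≤ 3 * Real.sqrt N * ε := by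
    calc l2Norm (A.mulVec y) ≤ matrixOpNorm A * l2Norm (y - x) := hAyx
    _ ≤ (3 * Real.sqrt N) * ε := by
        rw [hsym]
        apply mul_le_mul hA hxy _ (by positivity)
        rw [l2Norm_eq]; exact norm_nonneg _
  have hlow := hAy y hy𝒩
  have h6 : 6 * ε * Real.sqrt N * (1 - ε) ≤ 6 * ε * Real.sqrt N * l2Norm y := by
    apply mul_le_mul_of_nonneg_left hy2 (by positivity)
  nlinarith [hsN, hε0, hε, mul_pos hsN hε0, h6, hlow, hup]
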